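/- There exists a temporal fair division instance with n = 2 agents such that no allocation of M is simultaneously EF1 per day and SD-EF1 overall. In particular, this holds for the instance with eight goods arriving over three days as M_1 = {g_1,g_5,g_7}, M_2 = {g_2,g_4,g_6}, M_3 = {g_3,g_8}, where agent 1's values for g_1,...,g_8 are 8,7,6,5,4,3,2,1 and agent 2's values for g_1,...,g_8 are 6,8,7,5,2,4,1,3. -/
import Mathlib


open Finset
open scoped Classical

noncomputable section

/-- Total value of a bundle `X` under additive valuation `v`. -/
def totalVal {G : Type*} (v : G → ℝ) (X : Finset G) : ℝ := ∑ g ∈ X, v g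

/-- `A` is an allocation of the set of goods `S` among `n` agents. -/
def IsAlloc {G : Type*} (n : ℕ) (S : Finset G) (A : Fin n → Finset G) : Prop :=
  (∀ i j : Fin n, i ≠ j → Disjoint (A i) (A j)) ∧ Finset.univ.biUnion A = S

/-- The allocation `A` is EF1 (envy-free up to one good). -/
def EF1 {G : Type*} [DecidableEq G] (n : ℕ) (v : Fin n → G → ℝ)
    (A : Fin n → Finset G) : Prop :=
  ∀ i j : Fin n, A j ≠ ∅ → ∃ g ∈ A j, totalVal (v i) ((A j).erase g) ≤ totalVal (v i) (A i)

/-- The top-set `H_i(S,g) = {g' ∈ S : v g' ≥ v g}`. -/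
def topSet {G : Type*} (v : G → ℝ) (S : Finset G) (g : G) : Finset G :=
  S.filter (fun g' => v g ≤ v g')

/-- Stochastic dominance: `X ≽^SD Y` w.r.t. valuation `v` over the set of goods `S`. -/
def SDge {G : Type*} [DecidableEq G] (v : G → ℝ) (S X Y : Finset G) : Prop :=
  ∀ g ∈ S, (Y ∩ topSet v S g).card ≤ (X ∩ topSet v S g).card

/-- The allocation `A` of goods `S` is SD-EF1. -/
def SDEF1 {G : Type*} [DecidableEq G] (n : ℕ) (v : Fin n → G → ℝ) (S : Finset G)
    (A : Fin n → Finset G) : Prop :=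
  ∀ i j : Fin n, A j ≠ ∅ → ∃ g ∈ A j, SDge (v i) S (A i) ((A j).erase g)

/-- Goods `g_1, …, g_8` are encoded as `0, …, 7 : Fin 8`.
The days are `M_1 = {g_1, g_5, g_7}`, `M_2 = {g_2, g_4, g_6}`, `M_3 = {g_3, g_8}`. -/
def M6 : Fin 3 → Finset (Fin 8) := ![{0, 4, 6}, {1, 3, 5}, {2, 7}]

/-- Agent 1's values for `g_1, …, g_8` are `8,7,6,5,4,3,2,1` and agent 2's values are
`6,8,7,5,2,4,1,3`. -/
def v6 : Fin 2 → Fin 8 → ℝ := ![![8, 7, 6, 5, 4, 3, 2, 1], ![6, 8, 7, 5, 2, 4, 1, 3]]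

/-- Integer version of `v6`. -/
def w6 : Fin 2 → Fin 8 → ℤ := ![![8, 7, 6, 5, 4, 3, 2, 1], ![6, 8, 7, 5, 2, 4, 1, 3]]

lemma v6_eq_w6 (i : Fin 2) (g : Fin 8) : v6 i g = (w6 i g : ℝ) := by
  fin_cases i <;> fin_cases g <;> norm_num [v6, w6]

/-- Integer top set. -/
def topZ (v : Fin 8 → ℤ) (S : Finset (Fin 8)) (g : Fin 8) : Finset (Fin 8) :=
  S.filter (fun g' => v g ≤ v g')

/-- Integer, decidable version of EF1 for our instance. -/
def EF1Z (A : Fin 2 → Finset (Fin 8)) : Prop :=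
  ∀ i j : Fin 2, A j ≠ ∅ → ∃ g ∈ A j, ∑ x ∈ (A j).erase g, w6 i x ≤ ∑ x ∈ A i, w6 i x

/-- Integer, decidable version of SD-EF1 over all goods for our instance. -/
def SDEF1Z (A : Fin 2 → Finset (Fin 8)) : Prop :=
  ∀ i j : Fin 2, A j ≠ ∅ → ∃ g ∈ A j,
    ∀ g' : Fin 8, (((A j).erase g) ∩ topZ (w6 i) univ g').card ≤ (A i ∩ topZ (w6 i) univ g').card

instance : DecidablePred EF1Z := fun A => by unfold EF1Z; infer_instance
instance : DecidablePred SDEF1Z := fun A => by unfold SDEF1Z; infer_instance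

set_option maxRecDepth 10000 in
lemma key : ∀ B : Finset (Fin 8),
    ¬ ((∀ t : Fin 3, EF1Z (fun i => ![B, Bᶜ] i ∩ M6 t)) ∧ SDEF1Z ![B, Bᶜ]) := by decide

lemma totalVal_eq (i : Fin 2) (X : Finset (Fin 8)) :
    totalVal (v6 i) X = ((∑ x ∈ X, w6 i x : ℤ) : ℝ) := by
  rw [totalVal]
  push_cast
  exact Finset.sum_congr rfl fun g _ => v6_eq_w6 i g

lemma topSet_eq (i : Fin 2) (S : Finset (Fin 8)) (g : Fin 8) :
    topSet (v6 i) S g = topZ (w6 i) S g := by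
  apply Finset.filter_congr
  intro g' _
  simp only [v6_eq_w6, Int.cast_le]

lemma EF1_to_Z (A : Fin 2 → Finset (Fin 8)) (h : EF1 2 v6 A) : EF1Z A := by
  intro i j hj
  obtain ⟨g, hg, hle⟩ := h i j hj
  refine ⟨g, hg, ?_⟩
  rw [totalVal_eq, totalVal_eq] at hle
  exact_mod_cast hle

lemma SDEF1_to_Z (A : Fin 2 → Finset (Fin 8)) (h : SDEF1 2 v6 univ A) : SDEF1Z A := by
  intro i j hj
  obtain ⟨g, hg, hsd⟩ := h i j hj
  refine ⟨g, hg, fun g' => ?_⟩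
  have := hsd g' (mem_univ g')
  rwa [topSet_eq] at this

lemma biUnion_M6 : Finset.univ.biUnion M6 = (univ : Finset (Fin 8)) := by decide

/-- In the temporal fair division instance with two agents, valuations
`v6`, and days `M6`, no allocation is simultaneously EF1 per day and SD-EF1 overall. -/
theorem no_ef1_perDay_and_sdef1_overall :
    ∀ A : Fin 2 → Finset (Fin 8),
      IsAlloc 2 (Finset.univ.biUnion M6) A →
      ¬ ((∀ t : Fin 3, EF1 2 v6 (fun i => A i ∩ M6 t)) ∧
          SDEF1 2 v6 (Finset.univ.biUnion M6) A) := by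
  intro A hA h
  have hcov : A 0 ∪ A 1 = univ := by
    have h2 := hA.2
    rw [biUnion_M6] at h2
    rw [← h2]
    ext x
    simp [mem_biUnion, Fin.exists_fin_two]
  have hdis : Disjoint (A 0) (A 1) := hA.1 0 1 (by decide)
  have hA1 : A 1 = (A 0)ᶜ := by
    ext x
    simp only [mem_compl]
    constructor
    · intro hx hx0
      exact (Finset.disjoint_left.mp hdis hx0) hx
    · intro hx
      have : x ∈ A 0 ∪ A 1 := by rw [hcov]; exact mem_univ x
      rcases mem_union.mp this with h0 | h1
      · exact absurd h0 hx
      · exact h1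
  have hAfun : A = ![A 0, (A 0)ᶜ] := by
    funext i
    fin_cases i
    · simp
    · simpa using hA1
  apply key (A 0)
  constructor
  · intro t
    apply EF1_to_Z
    have := h.1 t
    rwa [hAfun] at this
  · apply SDEF1_to_Z
    have := h.2
    rw [biUnion_M6, hAfun] at this
    exact this
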